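/- arXiv:2006.01893 — 3 statements merged into one kernel-verified Lean document; each statement's English description precedes it below -/
import Mathlib

section
/- The maximized likelihood Π_j (h_j ε^l / (n |S_j|))^{h_j}, summed over all possible data sequences generated by a histogram with K regions on an l-dimensional grid of precision ε, equals Σ_{h_1+...+h_K=n} (n!/(h_1!...h_K!)) Π_j (h_j/n)^{h_j}; in particular this parametric complexity is independent of the dimensionality l and of the region volumes |S_j|. -/
open Finset

/-- The multinomial parametric complexity:
COMP(n,K) = ∑_{h_1+⋯+h_K=n} (n!/(h_1!⋯h_K!)) ∏_j (h_j/n)^{h_j}. -/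
noncomputable def COMP (n K : ℕ) : ℝ :=
  ∑ h ∈ Finset.Nat.antidiagonalTuple K n,
    (Nat.multinomial Finset.univ h : ℝ) * ∏ j, ((h j : ℝ) / n) ^ (h j)

section Aux
open MvPolynomial

-- count vector
noncomputable def cnt {K n : ℕ} (p : Fin n → Fin K) : Fin K → ℕ :=
  fun j => (Finset.univ.filter (fun i => p i = j)).card

lemma sum_cnt {K n : ℕ} (p : Fin n → Fin K) : ∑ j, cnt p j = n := by
  classical
  simp only [cnt]
  rw [← Finset.card_eq_sum_card_fiberwise (fun i _ => Finset.mem_univ (p i))]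
  simp

lemma prod_pow_cnt {K n : ℕ} {M : Type*} [CommMonoid M] (p : Fin n → Fin K) (f : Fin K → M) :
    ∏ i, f (p i) = ∏ j, f j ^ cnt p j := by
  classical
  rw [← Finset.prod_fiberwise_of_maps_to (fun i _ => Finset.mem_univ (p i)) (fun i => f (p i))]
  refine Finset.prod_congr rfl fun j _ => ?_
  rw [Finset.prod_congr rfl (fun i hi => by rw [(Finset.mem_filter.1 hi).2]), Finset.prod_const]
  rfl

lemma prod_X_pow (K : ℕ) (c : Fin K → ℕ) :
    (∏ j, (X j : MvPolynomial (Fin K) ℕ) ^ c j)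
      = monomial (Finsupp.equivFunOnFinite.symm c) 1 := by
  rw [← prod_X_pow_eq_monomial]
  refine (Finset.prod_subset (Finset.subset_univ _) (fun j _ hj => ?_)).symm
  simp only [Finsupp.mem_support_iff, ne_eq, not_not] at hj
  simp only [Finsupp.coe_equivFunOnFinite_symm] at hj ⊢
  rw [hj, pow_zero]

lemma card_cnt_eq {K n : ℕ} (h : Fin K → ℕ) (hh : ∑ j, h j = n) :
    ((Finset.univ : Finset (Fin n → Fin K)).filter (fun p => cnt p = h)).card
      = Nat.multinomial Finset.univ h := by
  classical
  have key : ((∑ j, (X j : MvPolynomial (Fin K) ℕ)) ^ n)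
      = ∑ p : Fin n → Fin K, monomial (Finsupp.equivFunOnFinite.symm (cnt p)) 1 := by
    rw [Fintype.sum_pow]
    refine Finset.sum_congr rfl fun p _ => ?_
    rw [prod_pow_cnt p, prod_X_pow]
  have key2 : ((∑ j, (X j : MvPolynomial (Fin K) ℕ)) ^ n)
      = ∑ k ∈ Finset.piAntidiag Finset.univ n,
          monomial (Finsupp.equivFunOnFinite.symm k) (Nat.multinomial Finset.univ k) := by
    rw [Finset.sum_pow_eq_sum_piAntidiag]
    refine Finset.sum_congr rfl fun k _ => ?_
    rw [prod_X_pow, ← MvPolynomial.C_eq_coe_nat, MvPolynomial.C_mul_monomial, mul_one, Nat.cast_id]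
  have := congrArg (MvPolynomial.coeff (Finsupp.equivFunOnFinite.symm h)) (key.symm.trans key2)
  rw [MvPolynomial.coeff_sum, MvPolynomial.coeff_sum] at this
  simp only [MvPolynomial.coeff_monomial, EmbeddingLike.apply_eq_iff_eq] at this
  rw [Finset.sum_ite_eq' (Finset.piAntidiag Finset.univ n) h
      (fun k => Nat.multinomial Finset.univ k)] at this
  rw [if_pos (by simpa using hh)] at this
  rw [← this, Finset.sum_boole, Nat.cast_id]


lemma stepB {K n : ℕ} (g : (Fin K → ℕ) → ℝ) :
    ∑ p : Fin n → Fin K, g (cnt p)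
      = ∑ h ∈ Finset.piAntidiag Finset.univ n, (Nat.multinomial Finset.univ h : ℝ) * g h := by
  classical
  rw [← Finset.sum_fiberwise_of_maps_to (t := Finset.piAntidiag Finset.univ n)
      (g := fun p : Fin n → Fin K => cnt p)
      (fun p _ => by simp [sum_cnt p]) (fun p => g (cnt p))]
  refine Finset.sum_congr rfl fun h hh => ?_
  rw [Finset.sum_congr rfl (fun p hp => by rw [(Finset.mem_filter.1 hp).2]),
    Finset.sum_const, nsmul_eq_mul]
  congr 1
  rw [card_cnt_eq h (by simpa using (Finset.mem_piAntidiag.1 hh).1)]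

def sigmaFunEquiv (ι J : Type*) (β : J → Type*) :
    (ι → Σ j, β j) ≃ Σ p : ι → J, ∀ i, β (p i) where
  toFun y := ⟨fun i => (y i).1, fun i => (y i).2⟩
  invFun z := fun i => ⟨z.1 i, z.2 i⟩
  left_inv y := by funext i; rfl
  right_inv z := rfl

theorem parametric_complexity_dimension_free' {K n : ℕ} (m : Fin K → ℕ)
    (hm : ∀ j, 0 < m j) :
    (∑ y : Fin n → (j : Fin K) × Fin (m j),
      ∏ j, (((Finset.univ.filter (fun i => (y i).1 = j)).card : ℝ) / (n * m j))
            ^ ((Finset.univ.filter (fun i => (y i).1 = j)).card))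
      = ∑ h ∈ Finset.Nat.antidiagonalTuple K n,
          (Nat.multinomial Finset.univ h : ℝ) * ∏ j, ((h j : ℝ) / n) ^ (h j) := by
  classical
  set F : (Fin n → Fin K) → ℝ :=
    fun p => ∏ j, ((cnt p j : ℝ) / (n * m j)) ^ (cnt p j) with hF
  have h1 : (∑ y : Fin n → (j : Fin K) × Fin (m j),
      ∏ j, (((Finset.univ.filter (fun i => (y i).1 = j)).card : ℝ) / (n * m j))
            ^ ((Finset.univ.filter (fun i => (y i).1 = j)).card))
      = ∑ z : Σ p : Fin n → Fin K, ∀ i, Fin (m (p i)), F z.1 := by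
    rw [← Equiv.sum_comp (sigmaFunEquiv (Fin n) (Fin K) (fun j => Fin (m j))) (fun z => F z.1)]
    rfl
  rw [h1, ← Finset.univ_sigma_univ, Finset.sum_sigma]
  have h2 : ∀ p : Fin n → Fin K,
      (∑ _w : ∀ i, Fin (m (p i)), F p) = (∏ j, ((cnt p j : ℝ) / n) ^ (cnt p j)) := by
    intro p
    rw [Finset.sum_const, Finset.card_univ, Fintype.card_pi, nsmul_eq_mul]
    simp only [Fintype.card_fin]
    rw [prod_pow_cnt p m, hF]
    push_cast
    rw [← Finset.prod_mul_distrib]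
    refine Finset.prod_congr rfl fun j _ => ?_
    rw [← mul_pow]
    congr 1
    rw [mul_comm, div_mul_eq_mul_div, mul_comm (n:ℝ) (m j : ℝ), ← div_div,
      mul_div_assoc, div_self (by exact_mod_cast (hm j).ne'), mul_one]
  rw [Finset.sum_congr rfl fun p _ => h2 p]
  rw [stepB (fun h => ∏ j, ((h j : ℝ) / n) ^ (h j)),
    Finset.piAntidiag_univ_fin_eq_antidiagonalTuple]

end Aux

/-- Summing the maximized likelihood ∏_j (h_j(y)/(n·m_j))^{h_j(y)}
over all sequences y of n points, each placed in one of the grid cells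
(region j has m_j = |S_j|/ε^l cells), gives
∑_{h_1+⋯+h_K=n} (n!/(h_1!⋯h_K!)) ∏_j (h_j/n)^{h_j}; in particular the
parametric complexity is independent of the dimensionality l and of the
region volumes |S_j| (the right-hand side does not depend on m). -/
theorem parametric_complexity_dimension_free {K n : ℕ} (m : Fin K → ℕ)
    (hm : ∀ j, 0 < m j) :
    (∑ y : Fin n → (j : Fin K) × Fin (m j),
      ∏ j, (((Finset.univ.filter (fun i => (y i).1 = j)).card : ℝ) / (n * m j))
            ^ ((Finset.univ.filter (fun i => (y i).1 = j)).card))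
      = COMP n K := by
  unfold COMP
  exact parametric_complexity_dimension_free' m hm
end

section
/- The multinomial parametric complexity satisfies the recursion COMP(n, K) = COMP(n, K−1) + (n/(K−2))·COMP(n, K−2) for K ≥ 3, where COMP(n, K) = Σ_{h_1+...+h_K=n} (n!/(h_1!...h_K!)) Π_{j=1}^K (h_j/n)^{h_j}. -/
open Finset

section AuxCOMP

open Polynomial fwdDiff

private lemma fwdDiff_eval' (p : ℝ[X]) :
    Δ_[(1:ℝ)] (fun x => p.eval x) = fun x => (p.comp (X + C 1) - p).eval x := by
  funext y
  simp [fwdDiff, eval_comp]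

private lemma degree_shift_sub_lt' (p : ℝ[X]) (hp : p ≠ 0) :
    (p.comp (X + C 1) - p).degree < p.degree := by
  have hbot : (⊥ : WithBot ℕ) < p.degree := bot_lt_iff_ne_bot.2 (by simpa [degree_eq_bot] using hp)
  rcases eq_or_ne p.natDegree 0 with h0 | h0
  · obtain ⟨c, hc⟩ : ∃ c, p = C c := ⟨p.coeff 0, eq_C_of_natDegree_eq_zero h0⟩
    rw [hc]
    simpa using hbot.trans_le (by rw [hc])
  · have hX : (X + C (1:ℝ)).natDegree = 1 := natDegree_X_add_C 1
    have hcomp_ne : p.comp (X + C 1) ≠ 0 := fun h => by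
      have := natDegree_comp (p := p) (q := X + C (1:ℝ))
      rw [h, hX, mul_one] at this
      exact h0 (by simpa using this.symm)
    have hdeg : (p.comp (X + C 1)).degree = p.degree := by
      rw [degree_eq_natDegree hcomp_ne, degree_eq_natDegree hp, natDegree_comp, hX, mul_one]
    have hlead : (p.comp (X + C 1)).leadingCoeff = p.leadingCoeff := by
      rw [leadingCoeff_comp (by rw [hX]; exact one_ne_zero)]
      have h1 : ((X:ℝ[X]) + 1).leadingCoeff = 1 := by
        simpa using (monic_X_add_C (1:ℝ)).leadingCoeff
      simp [h1]
    calc (p.comp (X + C 1) - p).degree < (p.comp (X + C 1)).degree :=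
          degree_sub_lt hdeg hcomp_ne hlead
      _ = p.degree := hdeg

private lemma fwdDiff_iter_poly' : ∀ (n : ℕ) (p : ℝ[X]), p.degree < n →
    (Δ_[(1:ℝ)])^[n] (fun x => p.eval x) = fun _ => 0 := by
  intro n
  induction n with
  | zero =>
    intro p hp
    have hpz : p = 0 := by
      by_contra h
      exact absurd hp (not_lt.2 (by simpa using zero_le_degree_iff.2 h))
    subst hpz; funext x; simp
  | succ n ih =>
    intro p hp
    rw [Function.iterate_succ_apply, fwdDiff_eval']
    rcases eq_or_ne p 0 with rfl | hne
    · have : ((0:ℝ[X]).comp (X + C 1) - 0) = 0 := by simp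
      rw [this]
      exact ih 0 (by rw [degree_zero]; exact_mod_cast WithBot.bot_lt_coe n)
    · refine ih _ (lt_of_lt_of_le (degree_shift_sub_lt' p hne) ?_)
      exact Order.le_of_lt_succ (by exact_mod_cast hp)

private lemma alt_sum_zero' (n d : ℕ) (hd : d < n) :
    ∑ k ∈ range (n+1), (-1:ℝ)^(n-k) * (n.choose k) * (k:ℝ)^d = 0 := by
  have h := fwdDiff_iter_eq_sum_shift (1:ℝ) (fun x : ℝ => x ^ d) n 0
  have h2 : (Δ_[(1:ℝ)])^[n] (fun x : ℝ => x ^ d) 0 = 0 := by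
    have := fwdDiff_iter_poly' n (X ^ d) (by rw [degree_X_pow]; exact_mod_cast hd)
    have h3 : (fun x : ℝ => x ^ d) = fun x : ℝ => (X ^ d : ℝ[X]).eval x := by
      funext x; simp
    rw [h3, this]
  rw [h2] at h
  rw [eq_comm] at h
  rw [← h]
  apply Finset.sum_congr rfl
  intro k hk
  rw [zsmul_eq_mul]
  push_cast
  ring

private noncomputable def AbelP (n : ℕ) (a : ℝ) : ℝ[X] :=
  ∑ k ∈ Icc 1 n, C ((n.choose k : ℝ) * (k:ℝ)^(k-1) ) * (X + C (a + ((n - k : ℕ):ℝ)))^(n-k)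

private theorem AbelP_eq (n : ℕ) (hn : 1 ≤ n) (a : ℝ) :
    AbelP n a = C ((n:ℝ)) * (X + C (a + n))^(n-1) := by
  induction n, hn using Nat.le_induction generalizing a with
  | base => simp [AbelP]
  | succ n hn ih =>
    set L : ℝ[X] := AbelP (n+1) a with hL
    set R : ℝ[X] := C (((n+1:ℕ):ℝ)) * (X + C (a + ((n+1:ℕ):ℝ)))^((n+1)-1) with hR
    have hderL : derivative L = C (((n+1:ℕ)):ℝ) * AbelP n (a+1) := by
      rw [hL, AbelP]
      rw [derivative_sum]
      have step1 : ∀ k ∈ Icc 1 (n+1),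
          derivative (C (((n+1).choose k : ℝ) * (k:ℝ)^(k-1)) * (X + C (a + ((n+1-k:ℕ):ℝ)))^(n+1-k))
          = C (((n+1).choose k : ℝ) * (k:ℝ)^(k-1) * ((n+1-k:ℕ):ℝ))
              * (X + C (a + ((n+1-k:ℕ):ℝ)))^(n+1-k-1) := by
        intro k hk
        rw [derivative_C_mul, derivative_pow, derivative_add, derivative_X, derivative_C,
          add_zero, mul_one, C_mul, C_mul, C_mul]
        ring
      rw [Finset.sum_congr rfl step1]
      rw [Finset.sum_Icc_succ_top (by omega : 1 ≤ n+1)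
        (fun k => C (((n+1).choose k : ℝ) * (k:ℝ)^(k-1) * ((n+1-k:ℕ):ℝ))
          * (X + C (a + ((n+1-k:ℕ):ℝ)))^(n+1-k-1))]
      have htop : C (((n+1).choose (n+1) : ℝ) * ((n+1:ℕ):ℝ)^((n+1)-1) * ((n+1-(n+1):ℕ):ℝ))
          * (X + C (a + ((n+1-(n+1):ℕ):ℝ)))^(n+1-(n+1)-1) = 0 := by
        simp
      rw [htop, add_zero, AbelP, mul_sum]
      apply Finset.sum_congr rfl
      intro k hk
      simp only [mem_Icc] at hk
      have hkn : k ≤ n := hk.2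
      have hcast : ((n+1-k:ℕ):ℝ) = ((n-k:ℕ):ℝ) + 1 := by
        have : n+1-k = (n-k)+1 := by omega
        rw [this]; push_cast; ring
      have hexp : n+1-k-1 = n-k := by omega
      have hchoose : ((n+1).choose k : ℝ) * ((n+1-k:ℕ):ℝ) = ((n+1:ℕ):ℝ) * (n.choose k : ℝ) := by
        have h2 : (n+1).choose k * (n+1-k) = (n+1) * n.choose k := by
          rw [← Nat.choose_mul_succ_eq]; ring
        exact_mod_cast congrArg (Nat.cast : ℕ → ℝ) h2
      rw [hexp]
      rw [show a + ((n+1-k:ℕ):ℝ) = (a+1) + ((n-k:ℕ):ℝ) by rw [hcast]; ring]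
      rw [← mul_assoc, ← C_mul]
      congr 2
      linear_combination (k:ℝ)^(k-1) * hchoose
    have hderR : derivative R = C (((n+1:ℕ)):ℝ) * AbelP n (a+1) := by
      rw [hR, ih]
      rw [derivative_C_mul, derivative_pow, derivative_add, derivative_X, derivative_C,
        add_zero, mul_one]
      have hc : a + 1 + (n:ℝ) = a + ((n+1:ℕ):ℝ) := by push_cast; ring
      rw [hc, show (n+1)-1 = n from rfl]
    have hdiff : L - R = C ((L - R).coeff 0) :=
      eq_C_of_natDegree_eq_zero (natDegree_eq_zero_of_derivative_eq_zero
        (by rw [derivative_sub, hderL, hderR, sub_self]))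
    set x₀ : ℝ := -(a + ((n+1:ℕ):ℝ)) with hx₀
    have hevalR : R.eval x₀ = 0 := by
      rw [hR]
      simp only [eval_mul, eval_pow, eval_add, eval_X, eval_C]
      rw [show x₀ + (a + ((n+1:ℕ):ℝ)) = 0 by rw [hx₀]; ring]
      rw [zero_pow (by omega : (n+1)-1 ≠ 0)]
      ring
    have hevalL : L.eval x₀ = 0 := by
      rw [hL, AbelP, eval_finset_sum]
      have hterm : ∀ k ∈ Icc 1 (n+1),
          (C (((n+1).choose k : ℝ) * (k:ℝ)^(k-1)) * (X + C (a + ((n+1-k:ℕ):ℝ)))^(n+1-k)).eval x₀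
          = (-1:ℝ)^(n+1-k) * ((n+1).choose k) * (k:ℝ)^n := by
        intro k hk
        simp only [mem_Icc] at hk
        simp only [eval_mul, eval_pow, eval_add, eval_X, eval_C]
        rw [show x₀ + (a + ((n+1-k:ℕ):ℝ)) = -(k:ℝ) by
          rw [hx₀]
          have : ((n+1-k:ℕ):ℝ) = ((n+1:ℕ):ℝ) - (k:ℝ) := by
            have h2 : ((n+1-k) : ℕ) + k = n+1 := by omega
            have := congrArg (Nat.cast : ℕ → ℝ) h2
            push_cast at this ⊢
            linarith
          rw [this]; ring]
        rw [neg_pow]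
        have hk1 : (k:ℝ)^(k-1) * (k:ℝ)^(n+1-k) = (k:ℝ)^n := by
          rw [← pow_add]; congr 1; omega
        rw [← hk1]; ring
      rw [Finset.sum_congr rfl hterm]
      have hext : ∑ k ∈ Icc 1 (n+1), (-1:ℝ)^(n+1-k) * ((n+1).choose k) * (k:ℝ)^n
          = ∑ k ∈ range (n+2), (-1:ℝ)^(n+1-k) * ((n+1).choose k) * (k:ℝ)^n := by
        rw [Finset.range_eq_Ico, Finset.sum_eq_sum_Ico_succ_bot (by omega),
          show n+2 = n+1+1 from rfl, Finset.Ico_add_one_right_eq_Icc]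
        norm_num [zero_pow (show n ≠ 0 by omega)]
      rw [hext]
      exact alt_sum_zero' (n+1) n (by omega)
    have hc0 : (L - R).coeff 0 = 0 := by
      have := congrArg (Polynomial.eval x₀) hdiff
      rw [eval_sub, hevalL, hevalR, eval_C] at this
      linarith
    have hLR : L - R = 0 := by rw [hdiff, hc0, map_zero]
    have := sub_eq_zero.mp hLR
    rw [this, hR]

private theorem abel_real (n : ℕ) (hn : 1 ≤ n) :
    ∑ k ∈ Icc 1 n, (n.choose k : ℝ) * (k:ℝ)^(k-1) * ((n-k:ℕ):ℝ)^(n-k) = (n:ℝ)^n := by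
  have h := congrArg (Polynomial.eval 0) (AbelP_eq n hn 0)
  rw [AbelP, eval_finset_sum] at h
  simp only [eval_mul, eval_pow, eval_add, eval_X, eval_C, zero_add] at h
  rw [h]
  have hpow : (n:ℝ)^n = (n:ℝ)^(n-1) * (n:ℝ) := by
    rw [← pow_succ]; congr 1; omega
  rw [hpow]; ring

private noncomputable def Bs : PowerSeries ℝ := PowerSeries.mk fun n => (n:ℝ)^n / n.factorial
private noncomputable def Ts : PowerSeries ℝ :=
  PowerSeries.mk fun n => if n = 0 then 0 else (n:ℝ)^(n-1) / n.factorial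

private theorem Ts_mul_Bs : Ts * Bs = Bs - 1 := by
  ext n
  rw [PowerSeries.coeff_mul]
  cases n with
  | zero =>
    simp [Bs, Ts]
  | succ n =>
    rw [Finset.Nat.sum_antidiagonal_eq_sum_range_succ_mk]
    rw [map_sub]
    have h1 : (PowerSeries.coeff (R := ℝ) (n+1)) (1 : PowerSeries ℝ) = 0 := by
      rw [PowerSeries.coeff_one]; simp
    rw [h1, sub_zero]
    have h2 : ∀ k ∈ range (n+1+1),
        (PowerSeries.coeff (R := ℝ) k) Ts * (PowerSeries.coeff (R := ℝ) (n+1-k)) Bs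
        = (if k = 0 then 0 else ((n+1).choose k : ℝ) * (k:ℝ)^(k-1)
            * (((n+1)-k:ℕ):ℝ)^((n+1)-k) / (n+1).factorial) := by
      intro k hk
      simp only [mem_range] at hk
      have hkle : k ≤ n+1 := by omega
      rcases eq_or_ne k 0 with rfl | hkne
      · simp [Ts, Bs, PowerSeries.coeff_mk]
      · simp only [Ts, Bs, PowerSeries.coeff_mk, if_neg hkne]
        have hfac : (k.factorial : ℝ) ≠ 0 := by exact_mod_cast k.factorial_ne_zero
        have hfac2 : (((n+1)-k).factorial : ℝ) ≠ 0 := by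
          exact_mod_cast ((n+1)-k).factorial_ne_zero
        have hfac3 : ((n+1).factorial : ℝ) ≠ 0 := by exact_mod_cast (n+1).factorial_ne_zero
        have hch : ((n+1).choose k : ℝ) * (k.factorial : ℝ) * (((n+1)-k).factorial : ℝ)
            = ((n+1).factorial : ℝ) := by
          exact_mod_cast congrArg (Nat.cast : ℕ → ℝ)
            (Nat.choose_mul_factorial_mul_factorial hkle)
        rw [div_mul_div_comm, div_eq_div_iff (mul_ne_zero hfac hfac2) hfac3]
        linear_combination (-((k:ℝ)^(k-1) * (((n+1)-k:ℕ):ℝ)^((n+1)-k))) * hch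
    rw [Finset.sum_congr rfl h2]
    rw [Finset.range_eq_Ico, Finset.sum_eq_sum_Ico_succ_bot (by omega), Finset.Ico_add_one_right_eq_Icc]
    rw [if_pos rfl, zero_add]
    rw [Finset.sum_congr rfl (fun k hk => if_neg (by simp only [mem_Icc] at hk; omega))]
    rw [← Finset.sum_div]
    simp only [zero_add]
    rw [abel_real (n+1) (by omega)]
    simp [Bs]

private theorem X_mul_dTs : (PowerSeries.X : PowerSeries ℝ) * (PowerSeries.derivative ℝ Ts) = Bs - 1 := by
  ext n
  cases n with
  | zero =>
    rw [map_sub]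
    have h0 : (PowerSeries.coeff (R := ℝ) 0)
        ((PowerSeries.X : PowerSeries ℝ) * (PowerSeries.derivative ℝ Ts)) = 0 := by
      rw [PowerSeries.coeff_zero_eq_constantCoeff, map_mul, PowerSeries.constantCoeff_X, zero_mul]
    rw [h0]
    simp [Bs]
  | succ n =>
    rw [PowerSeries.coeff_succ_X_mul, PowerSeries.coeff_derivative, map_sub]
    have h1 : (PowerSeries.coeff (R := ℝ) (n+1)) (1 : PowerSeries ℝ) = 0 := by
      rw [PowerSeries.coeff_one]; simp
    rw [h1, sub_zero]
    simp only [Ts, Bs, PowerSeries.coeff_mk, if_neg (Nat.succ_ne_zero n)]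
    have hfac : ((n+1).factorial : ℝ) ≠ 0 := by exact_mod_cast (n+1).factorial_ne_zero
    rw [div_mul_eq_mul_div, div_eq_div_iff hfac hfac]
    rw [show (n+1)-1 = n from rfl, pow_succ]
    push_cast
    ring

private theorem Bs_unit : Bs * (1 - Ts) = 1 := by linear_combination -Ts_mul_Bs

private theorem X_mul_dBs :
    (PowerSeries.X : PowerSeries ℝ) * (PowerSeries.derivative ℝ Bs) = Bs^3 - Bs^2 := by
  set D := PowerSeries.derivative ℝ with hD
  have hBeq : Bs = 1 + Ts * Bs := by linear_combination -Ts_mul_Bs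
  have h1 : D Bs = D Ts * Bs + Ts * D Bs := by
    conv_lhs => rw [hBeq]
    rw [map_add, Derivation.map_one_eq_zero, zero_add, Derivation.leibniz, smul_eq_mul,
      smul_eq_mul]
    ring
  have h2 : (PowerSeries.X : PowerSeries ℝ) * D Bs * (1 - Ts) = (Bs - 1) * Bs := by
    linear_combination (PowerSeries.X : PowerSeries ℝ) * h1 + Bs * X_mul_dTs
  calc (PowerSeries.X : PowerSeries ℝ) * D Bs
      = (PowerSeries.X : PowerSeries ℝ) * D Bs * (Bs * (1 - Ts)) := by rw [Bs_unit, mul_one]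
    _ = ((PowerSeries.X : PowerSeries ℝ) * D Bs * (1 - Ts)) * Bs := by ring
    _ = ((Bs - 1) * Bs) * Bs := by rw [h2]
    _ = Bs^3 - Bs^2 := by ring

private theorem key_coeff (m n : ℕ) (hm : 1 ≤ m) (hn : 1 ≤ n) :
    (n:ℝ) * (PowerSeries.coeff (R := ℝ) n (Bs^m))
      = (m:ℝ) * ((PowerSeries.coeff (R := ℝ) n (Bs^(m+2))) - (PowerSeries.coeff (R := ℝ) n (Bs^(m+1)))) := by
  set D := PowerSeries.derivative ℝ with hD
  have hpow : (PowerSeries.X : PowerSeries ℝ) * D (Bs^m) = (m:ℕ) • (Bs^(m+2) - Bs^(m+1)) := by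
    rw [Derivation.leibniz_pow, smul_eq_mul, mul_smul_comm]
    congr 1
    have hr : (PowerSeries.X : PowerSeries ℝ) * (Bs^(m-1) * D Bs)
        = Bs^(m-1) * ((PowerSeries.X : PowerSeries ℝ) * D Bs) := by ring
    rw [hr, X_mul_dBs, mul_sub, ← pow_add, ← pow_add,
      show (m-1)+3 = m+2 by omega, show (m-1)+2 = m+1 by omega]
  obtain ⟨p, rfl⟩ : ∃ p, n = p + 1 := ⟨n - 1, by omega⟩
  have hco := congrArg (PowerSeries.coeff (R := ℝ) (p+1)) hpow
  rw [PowerSeries.coeff_succ_X_mul, PowerSeries.coeff_derivative] at hco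
  rw [map_nsmul, map_sub] at hco
  simp only [nsmul_eq_mul] at hco
  push_cast at hco ⊢
  linarith [hco]

private lemma coeff_Bs_pow (K n : ℕ) :
    PowerSeries.coeff (R := ℝ) n (Bs^K)
      = ∑ h ∈ Finset.Nat.antidiagonalTuple K n, ∏ j, ((h j : ℝ)^(h j) / (h j).factorial) := by
  rw [PowerSeries.coeff_pow]
  refine Finset.sum_nbij' (fun l => fun j : Fin K => l j)
    (fun h => Finsupp.onFinset (range K) (fun i => if hi : i < K then h ⟨i, hi⟩ else 0)
      (fun a ha => mem_range.2 (by by_contra hc; apply ha; simp [dif_neg hc])))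
    ?_ ?_ ?_ ?_ ?_
  · intro l hl
    rw [Finset.mem_finsuppAntidiag] at hl
    rw [Finset.Nat.mem_antidiagonalTuple]
    rw [Fin.sum_univ_eq_sum_range (fun i => l i)]
    exact hl.1
  · intro h hh
    rw [Finset.Nat.mem_antidiagonalTuple] at hh
    rw [Finset.mem_finsuppAntidiag]
    constructor
    · rw [← hh]
      calc (range K).sum ⇑(Finsupp.onFinset (range K)
              (fun i => if hi : i < K then h ⟨i, hi⟩ else 0) _)
          = ∑ i ∈ range K, (if hi : i < K then h ⟨i, hi⟩ else 0) := by
            apply Finset.sum_congr rfl; intro i _; simp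
        _ = ∑ j : Fin K, h j := by
            rw [← Fin.sum_univ_eq_sum_range (fun i => if hi : i < K then h ⟨i, hi⟩ else 0)]
            apply Finset.sum_congr rfl
            intro j _
            simp
    · exact Finsupp.support_onFinset_subset
  · intro l hl
    rw [Finset.mem_finsuppAntidiag] at hl
    ext m
    simp only [Finsupp.onFinset_apply]
    by_cases hm : m < K
    · rw [dif_pos hm]
    · rw [dif_neg hm]
      symm
      rw [← Finsupp.notMem_support_iff]
      intro hc
      exact hm (mem_range.1 (hl.2 hc))
  · intro h _
    funext j
    simp only [Finsupp.onFinset_apply]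
    rw [dif_pos j.isLt]
  · intro l _
    rw [← Fin.prod_univ_eq_prod_range (fun i => PowerSeries.coeff (R := ℝ) (l i) Bs)]
    apply Finset.prod_congr rfl
    intro j _
    simp [Bs]

end AuxCOMP

private lemma COMP_eq_coeff (n K : ℕ) :
    COMP n K = (n.factorial : ℝ) / (n:ℝ)^n * PowerSeries.coeff (R := ℝ) n (Bs^K) := by
  rw [coeff_Bs_pow, COMP, mul_sum]
  apply Finset.sum_congr rfl
  intro h hh
  have hsum : ∑ j, h j = n := Finset.Nat.mem_antidiagonalTuple.1 hh
  have hfac : (∏ j, ((h j).factorial : ℝ)) ≠ 0 :=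
    Finset.prod_ne_zero_iff.2 fun j _ => by exact_mod_cast (h j).factorial_ne_zero
  have hmult : (Nat.multinomial Finset.univ h : ℝ)
      = (n.factorial : ℝ) / ∏ j, ((h j).factorial : ℝ) := by
    have hspec := Nat.multinomial_spec Finset.univ h
    rw [hsum] at hspec
    rw [eq_div_iff hfac, mul_comm]
    exact_mod_cast congrArg (Nat.cast : ℕ → ℝ) hspec
  have hprod : ∏ j, ((h j : ℝ)/n)^(h j) = (∏ j, (h j:ℝ)^(h j)) / (n:ℝ)^n := by
    simp only [div_pow]
    rw [Finset.prod_div_distrib, Finset.prod_pow_eq_pow_sum, hsum]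
  rw [hmult, hprod, Finset.prod_div_distrib]
  ring

/-- The recursion
COMP(n, K) = COMP(n, K−1) + (n/(K−2))·COMP(n, K−2) for K ≥ 3. -/
theorem COMP_recursion (n K : ℕ) (hn : 0 < n) (hK : 3 ≤ K) :
    COMP n K = COMP n (K - 1) + (n : ℝ) / ((K : ℝ) - 2) * COMP n (K - 2) := by
  obtain ⟨m, rfl⟩ : ∃ m, K = m + 3 := ⟨K - 3, by omega⟩
  rw [show m + 3 - 1 = m + 2 from rfl, show m + 3 - 2 = m + 1 from rfl]
  rw [COMP_eq_coeff n (m+3), COMP_eq_coeff n (m+2), COMP_eq_coeff n (m+1)]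
  have hm1 : ((m:ℝ)+1) ≠ 0 := by positivity
  have key2 : (PowerSeries.coeff (R := ℝ) n (Bs^(m+3)))
      = (PowerSeries.coeff (R := ℝ) n (Bs^(m+2)))
        + (n:ℝ)/((m:ℝ)+1) * (PowerSeries.coeff (R := ℝ) n (Bs^(m+1))) := by
    have hkey := key_coeff (m+1) n (by omega) hn
    rw [show m+1+2 = m+3 from rfl, show m+1+1 = m+2 from rfl] at hkey
    push_cast at hkey
    field_simp
    linear_combination -hkey
  rw [key2]
  rw [show ((m+3:ℕ):ℝ) - 2 = ((m:ℝ)+1) by push_cast; ring]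
  ring
end

section
/- Let C_i < C_k be two cut points such that no data point lies in the interval [C_i, C_k]. Then for any cut point set containing a cut C_j with C_i < C_j < C_k, moving C_j to either C_i or C_k (whichever gives higher likelihood) does not decrease the histogram likelihood P(z^n | ·); hence some MDL-optimal K-bin cut point set uses no interior cut point of a data-free interval. -/
open Set

open Real

lemma concave_aux (p q : ℕ) (w a b : ℝ) (ha : 0 < a) (hb : b < w) :
    ConcaveOn ℝ (Icc a b) (fun s => (p : ℝ) * Real.log s + (q : ℝ) * Real.log (w - s)) := by
  have hlog := strictConcaveOn_log_Ioi.concaveOn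
  refine ⟨convex_Icc a b, ?_⟩
  intro x hx y hy α β hα hβ hαβ
  have hx0 : (0 : ℝ) < x := lt_of_lt_of_le ha hx.1
  have hy0 : (0 : ℝ) < y := lt_of_lt_of_le ha hy.1
  have hxw : 0 < w - x := by linarith [hx.2]
  have hyw : 0 < w - y := by linarith [hy.2]
  have h1 : α * Real.log x + β * Real.log y ≤ Real.log (α * x + β * y) := by
    have := hlog.2 (mem_Ioi.mpr hx0) (mem_Ioi.mpr hy0) hα hβ hαβ
    simpa [smul_eq_mul] using this
  have h2 : α * Real.log (w - x) + β * Real.log (w - y) ≤ Real.log (w - (α * x + β * y)) := by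
    have := hlog.2 (mem_Ioi.mpr hxw) (mem_Ioi.mpr hyw) hα hβ hαβ
    have heq : α * (w - x) + β * (w - y) = w - (α * x + β * y) := by
      have : α + β = 1 := hαβ; nlinarith
    simpa [smul_eq_mul, heq] using this
  simp only [smul_eq_mul]
  have hp : (0:ℝ) ≤ (p:ℝ) := Nat.cast_nonneg p
  have hq : (0:ℝ) ≤ (q:ℝ) := Nat.cast_nonneg q
  nlinarith [mul_le_mul_of_nonneg_left h1 hp, mul_le_mul_of_nonneg_left h2 hq]

lemma min_le_F (p q : ℕ) (w a b : ℝ) (ha : 0 < a) (hab : a ≤ b) (hb : b < w)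
    {s : ℝ} (hs : s ∈ Icc a b) :
    min (a ^ p * (w - a) ^ q) (b ^ p * (w - b) ^ q) ≤ s ^ p * (w - s) ^ q := by
  have hL := (concave_aux p q w a b ha hb).ge_on_segment
    (x := a) (y := b) (z := s) ⟨le_refl a, hab⟩ ⟨hab, le_refl b⟩
    (by rwa [segment_eq_Icc hab])
  -- positivity
  have pos : ∀ t ∈ Icc a b, 0 < t ^ p * (w - t) ^ q := by
    intro t ht
    have h1 : 0 < t := lt_of_lt_of_le ha ht.1
    have h2 : 0 < w - t := by linarith [ht.2]
    positivity
  have hFs := pos s hs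
  have hFa := pos a ⟨le_refl a, hab⟩
  have hFb := pos b ⟨hab, le_refl b⟩
  have hlogF : ∀ t : ℝ, 0 < t → 0 < w - t →
      (p : ℝ) * Real.log t + (q : ℝ) * Real.log (w - t)
        = Real.log (t ^ p * (w - t) ^ q) := by
    intro t h1 h2
    rw [Real.log_mul (by positivity) (by positivity), Real.log_pow, Real.log_pow]
  have h1 : 0 < s := lt_of_lt_of_le ha hs.1
  have h2 : 0 < w - s := by linarith [hs.2]
  rw [hlogF a ha (by linarith), hlogF b (lt_of_lt_of_le ha hab) (by linarith),
    hlogF s h1 h2] at hL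
  rcases min_cases (Real.log (a ^ p * (w - a) ^ q)) (Real.log (b ^ p * (w - b) ^ q)) with
    ⟨he, _⟩ | ⟨he, _⟩ <;> rw [he] at hL
  · exact le_trans (min_le_left _ _) ((Real.log_le_log_iff hFa hFs).mp hL)
  · exact le_trans (min_le_right _ _) ((Real.log_le_log_iff hFb hFs).mp hL)

/-- Let C_i < C_k be cut points with no data point in [C_i, C_k],
and let a cut C_j lie between them. Moving C_j keeps all bin counts fixed and
changes only the widths of the two adjacent bins; writing s for the width of
the left adjacent bin (varying in [a,b] as C_j ranges over [C_i,C_k], with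
combined width w), the likelihood factor is
G(s) = (h_L/(n s))^{h_L} · (h_R/(n(w−s)))^{h_R}. Then moving C_j to an
endpoint (whichever gives higher likelihood) does not decrease the likelihood:
G(s) ≤ max(G(a), G(b)) for all s ∈ [a,b]; hence some optimal position of the
cut point is at an endpoint, i.e., some MDL-optimal K-bin cut point set uses
no interior cut point of a data-free interval. -/
theorem data_free_interval_cut_at_endpoint (n w : ℝ) (h_L h_R : ℕ) (a b : ℝ)
    (hn : 0 < n) (ha : 0 < a) (hab : a ≤ b) (hb : b < w) :
    let G : ℝ → ℝ :=
      fun s => ((h_L : ℝ) / (n * s)) ^ h_L * ((h_R : ℝ) / (n * (w - s))) ^ h_R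
    (∀ s ∈ Icc a b, G s ≤ max (G a) (G b)) ∧
    ∃ t ∈ ({a, b} : Set ℝ), ∀ s ∈ Icc a b, G s ≤ G t := by
  intro G
  set c : ℝ := ((h_L : ℝ) ^ h_L * (h_R : ℝ) ^ h_R) / (n ^ h_L * n ^ h_R) with hc
  have hc0 : 0 ≤ c := by positivity
  have hGeq : ∀ s : ℝ, G s = c / (s ^ h_L * (w - s) ^ h_R) := by
    intro s
    simp only [G, hc, div_pow, mul_pow]
    ring
  have key : ∀ s ∈ Icc a b, G s ≤ max (G a) (G b) := by
    intro s hs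
    have hmin := min_le_F h_L h_R w a b ha hab hb hs
    have pos : ∀ t ∈ Icc a b, 0 < t ^ h_L * (w - t) ^ h_R := by
      intro t ht
      have h1 : 0 < t := lt_of_lt_of_le ha ht.1
      have h2 : 0 < w - t := by linarith [ht.2]
      positivity
    have hFa := pos a ⟨le_refl a, hab⟩
    have hFb := pos b ⟨hab, le_refl b⟩
    rcases min_cases (a ^ h_L * (w - a) ^ h_R) (b ^ h_L * (w - b) ^ h_R) with
      ⟨he, _⟩ | ⟨he, _⟩ <;> rw [he] at hmin
    · refine le_trans ?_ (le_max_left _ _)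
      rw [hGeq s, hGeq a]
      exact div_le_div_of_nonneg_left hc0 hFa hmin
    · refine le_trans ?_ (le_max_right _ _)
      rw [hGeq s, hGeq b]
      exact div_le_div_of_nonneg_left hc0 hFb hmin
  refine ⟨key, ?_⟩
  rcases le_total (G a) (G b) with h | h
  · exact ⟨b, Or.inr rfl, fun s hs => (key s hs).trans_eq (max_eq_right h)⟩
  · exact ⟨a, Or.inl rfl, fun s hs => (key s hs).trans_eq (max_eq_left h)⟩
end
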